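/- For 1 ≤ p < ∞ and n ≥ 1, the L^p norm of x ↦ Kₙ((x−t)²)(x) on [0,1] satisfies ‖Kₙ((x−·)²)(x)‖_p ≤ (1/(n+1))^{1/p}. Consequently, for every f ∈ C[0,1], ‖Kₙ(f) − f‖_p ≤ 2·ω(f, (n+1)^{−1/(2p)}) up to an absolute constant in the argument of ω. -/
import Mathlib

open Set MeasureTheory

/-- The Kantorovich polynomial operator. -/
noncomputable def K (n : ℕ) (f : ℝ → ℝ) (x : ℝ) : ℝ :=
  ((n : ℝ) + 1) * ∑ k ∈ Finset.range (n + 1),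
    (n.choose k : ℝ) * x ^ k * (1 - x) ^ (n - k) *
      ∫ t in ((k : ℝ) / ((n : ℝ) + 1))..(((k : ℝ) + 1) / ((n : ℝ) + 1)), f t

/-- Modulus of continuity of `f` on a set `S`. -/
noncomputable def modulus (f : ℝ → ℝ) (S : Set ℝ) (δ : ℝ) : ℝ :=
  sSup {d : ℝ | ∃ x ∈ S, ∃ y ∈ S, |x - y| ≤ δ ∧ d = |f x - f y|}

section Aux

lemma sum0 (n : ℕ) (x : ℝ) : ∑ k ∈ Finset.range (n+1), (n.choose k : ℝ) * x^k * (1-x)^(n-k) = 1 := by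
  have h : (1:ℝ) = (x + (1-x))^n := by ring_nf
  conv_rhs => rw [h, add_pow]
  apply Finset.sum_congr rfl; intro k _; ring

lemma sum1 (n : ℕ) (x : ℝ) : ∑ k ∈ Finset.range (n+1), (k:ℝ) * ((n.choose k : ℝ) * x^k * (1-x)^(n-k)) = n * x := by
  have h := congrArg (Polynomial.eval x) (bernsteinPolynomial.sum_smul ℝ n)
  simp only [Polynomial.eval_finset_sum, bernsteinPolynomial, Polynomial.eval_smul,
    Polynomial.eval_mul, Polynomial.eval_pow, Polynomial.eval_sub, Polynomial.eval_one,
    Polynomial.eval_X, Polynomial.eval_natCast, smul_eq_mul, nsmul_eq_mul] at h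
  rw [← h]

lemma sum2 (n : ℕ) (x : ℝ) : ∑ k ∈ Finset.range (n+1), (k:ℝ)^2 * ((n.choose k : ℝ) * x^k * (1-x)^(n-k)) = n*((n:ℝ)-1) * x^2 + n*x := by
  have h := congrArg (Polynomial.eval x) (bernsteinPolynomial.sum_mul_smul ℝ n)
  simp only [Polynomial.eval_finset_sum, bernsteinPolynomial, Polynomial.eval_smul,
    Polynomial.eval_mul, Polynomial.eval_pow, Polynomial.eval_sub, Polynomial.eval_one,
    Polynomial.eval_X, Polynomial.eval_natCast, smul_eq_mul, nsmul_eq_mul] at h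
  have h1 := sum1 n x
  have key : ∑ k ∈ Finset.range (n+1), (k:ℝ)^2 * ((n.choose k : ℝ) * x^k * (1-x)^(n-k))
      = ∑ k ∈ Finset.range (n+1), ((k*(k-1) : ℕ) : ℝ) * ((n.choose k : ℝ) * x^k * (1-x)^(n-k))
      + ∑ k ∈ Finset.range (n+1), (k:ℝ) * ((n.choose k : ℝ) * x^k * (1-x)^(n-k)) := by
    rw [← Finset.sum_add_distrib]
    apply Finset.sum_congr rfl; intro k _
    have : ((k*(k-1) : ℕ) : ℝ) = (k:ℝ)^2 - k := by
      cases k with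
      | zero => simp
      | succ m => push_cast [Nat.succ_sub_one]; ring
    rw [this]; ring
  rw [key, h1]
  have h2 : ∑ k ∈ Finset.range (n+1), ((k*(k-1) : ℕ) : ℝ) * ((n.choose k : ℝ) * x^k * (1-x)^(n-k)) = ((n*(n-1) : ℕ) : ℝ) * x^2 := by
    rw [← h]
  rw [h2]
  cases n with
  | zero => simp
  | succ m => push_cast [Nat.succ_sub_one]; ring

open intervalIntegral in
lemma integral_sq (x a b : ℝ) : ∫ t in a..b, (x - t)^2 = (b^3 - a^3)/3 - x*(b^2 - a^2) + x^2*(b-a) := by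
  have h : ∀ t : ℝ, (x - t)^2 = t^2 - (2*x)*t + x^2 := by intro t; ring
  simp_rw [h]
  rw [intervalIntegral.integral_add, intervalIntegral.integral_sub]
  · rw [intervalIntegral.integral_const, intervalIntegral.integral_const_mul]
    simp only [integral_pow, smul_eq_mul]
    rw [integral_id]
    push_cast; ring
  all_goals
    apply Continuous.intervalIntegrable
    continuity

lemma phi_eq (n : ℕ) (x : ℝ) :
    K n (fun t => (x - t)^2) x = (((n:ℝ)-1)*x*(1-x) + 1/3)/(((n:ℝ)+1)^2) := by
  have hN : ((n:ℝ)+1) ≠ 0 := by positivity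
  unfold K
  have hterm : ∀ k ∈ Finset.range (n+1),
      (n.choose k : ℝ) * x^k * (1-x)^(n-k) *
        ∫ t in ((k:ℝ)/((n:ℝ)+1))..(((k:ℝ)+1)/((n:ℝ)+1)), (x - t)^2
      = ((1/(3*((n:ℝ)+1)^2) - x/((n:ℝ)+1) + x^2)/((n:ℝ)+1)) * ((n.choose k : ℝ) * x^k * (1-x)^(n-k))
      + ((1/(((n:ℝ)+1)^2) - 2*x/((n:ℝ)+1))/((n:ℝ)+1)) * ((k:ℝ) * ((n.choose k : ℝ) * x^k * (1-x)^(n-k)))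
      + (1/((((n:ℝ)+1)^2)*((n:ℝ)+1))) * ((k:ℝ)^2 * ((n.choose k : ℝ) * x^k * (1-x)^(n-k))) := by
    intro k _
    rw [integral_sq]
    field_simp
    ring
  rw [Finset.sum_congr rfl hterm]
  rw [Finset.sum_add_distrib, Finset.sum_add_distrib, ← Finset.mul_sum, ← Finset.mul_sum, ← Finset.mul_sum]
  rw [sum0, sum1, sum2]
  field_simp
  ring

lemma endpoints (n k : ℕ) (hk : k ∈ Finset.range (n+1)) :
    (0:ℝ) ≤ (k:ℝ)/((n:ℝ)+1) ∧ (k:ℝ)/((n:ℝ)+1) ≤ ((k:ℝ)+1)/((n:ℝ)+1) ∧ ((k:ℝ)+1)/((n:ℝ)+1) ≤ 1 := by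
  have hN : (0:ℝ) < (n:ℝ)+1 := by positivity
  have hk' : (k:ℝ) + 1 ≤ (n:ℝ) + 1 := by
    have h1 := Finset.mem_range.mp hk
    have : (k:ℝ) ≤ n := by exact_mod_cast Nat.lt_succ_iff.mp h1
    linarith
  refine ⟨by positivity, by gcongr; linarith, by rw [div_le_one hN]; exact hk'⟩

lemma K_affine (n : ℕ) (c d x : ℝ) :
    K n (fun t => c + d*(x - t)^2) x = c + d * ((((n:ℝ)-1)*x*(1-x) + 1/3)/(((n:ℝ)+1)^2)) := by
  have hN : ((n:ℝ)+1) ≠ 0 := by positivity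
  have hphi := phi_eq n x
  unfold K at hphi ⊢
  simp only at hphi
  have hterm : ∀ k ∈ Finset.range (n+1),
      (n.choose k : ℝ) * x^k * (1-x)^(n-k) *
        ∫ t in ((k:ℝ)/((n:ℝ)+1))..(((k:ℝ)+1)/((n:ℝ)+1)), (c + d*(x - t)^2)
      = (c/((n:ℝ)+1)) * ((n.choose k : ℝ) * x^k * (1-x)^(n-k))
      + d * ((n.choose k : ℝ) * x^k * (1-x)^(n-k) *
          ∫ t in ((k:ℝ)/((n:ℝ)+1))..(((k:ℝ)+1)/((n:ℝ)+1)), (x - t)^2) := by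
    intro k _
    rw [intervalIntegral.integral_add (f := fun _ => c) (g := fun t => d*(x-t)^2)
      intervalIntegrable_const
      ((by continuity : Continuous fun t : ℝ => d*(x-t)^2).intervalIntegrable _ _),
      intervalIntegral.integral_const_mul, intervalIntegral.integral_const, smul_eq_mul]
    field_simp
    ring
  rw [Finset.sum_congr rfl hterm, Finset.sum_add_distrib, ← Finset.mul_sum, ← Finset.mul_sum, sum0,
    mul_add, mul_one, mul_div_cancel₀ _ hN]
  linear_combination d * hphi

lemma K_sub_const (n : ℕ) (f : ℝ → ℝ) (x c : ℝ)
    (hf : ∀ k ∈ Finset.range (n+1), IntervalIntegrable f volume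
      ((k:ℝ)/((n:ℝ)+1)) (((k:ℝ)+1)/((n:ℝ)+1))) :
    K n (fun t => f t - c) x = K n f x - c := by
  have hN : ((n:ℝ)+1) ≠ 0 := by positivity
  unfold K
  have hterm : ∀ k ∈ Finset.range (n+1),
      (n.choose k : ℝ) * x^k * (1-x)^(n-k) *
        ∫ t in ((k:ℝ)/((n:ℝ)+1))..(((k:ℝ)+1)/((n:ℝ)+1)), (f t - c)
      = (n.choose k : ℝ) * x^k * (1-x)^(n-k) *
          (∫ t in ((k:ℝ)/((n:ℝ)+1))..(((k:ℝ)+1)/((n:ℝ)+1)), f t)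
      + (-c/((n:ℝ)+1)) * ((n.choose k : ℝ) * x^k * (1-x)^(n-k)) := by
    intro k hk
    rw [intervalIntegral.integral_sub (hf k hk) intervalIntegrable_const,
      intervalIntegral.integral_const, smul_eq_mul]
    field_simp
    ring
  rw [Finset.sum_congr rfl hterm, Finset.sum_add_distrib, ← Finset.mul_sum, sum0, mul_one, mul_add]
  field_simp
  ring

lemma bk_nonneg (n k : ℕ) (x : ℝ) (hx : x ∈ Icc (0:ℝ) 1) :
    0 ≤ (n.choose k : ℝ) * x^k * (1-x)^(n-k) := by
  obtain ⟨h0, h1⟩ := hx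
  have : (0:ℝ) ≤ 1 - x := by linarith
  positivity

lemma K_abs_le (n : ℕ) (g : ℝ → ℝ) (x : ℝ) (hx : x ∈ Icc (0:ℝ) 1) :
    |K n g x| ≤ K n (fun t => |g t|) x := by
  have hN : (0:ℝ) ≤ (n:ℝ)+1 := by positivity
  unfold K
  rw [abs_mul, abs_of_nonneg hN]
  apply mul_le_mul_of_nonneg_left ?_ hN
  refine le_trans (Finset.abs_sum_le_sum_abs _ _) (Finset.sum_le_sum ?_)
  intro k hk
  rw [abs_mul, abs_of_nonneg (bk_nonneg n k x hx)]
  apply mul_le_mul_of_nonneg_left ?_ (bk_nonneg n k x hx)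
  exact intervalIntegral.abs_integral_le_integral_abs (endpoints n k hk).2.1

lemma K_le (n : ℕ) (g h : ℝ → ℝ) (x : ℝ) (hx : x ∈ Icc (0:ℝ) 1)
    (hg : ∀ k ∈ Finset.range (n+1), IntervalIntegrable g volume
      ((k:ℝ)/((n:ℝ)+1)) (((k:ℝ)+1)/((n:ℝ)+1)))
    (hh : ∀ k ∈ Finset.range (n+1), IntervalIntegrable h volume
      ((k:ℝ)/((n:ℝ)+1)) (((k:ℝ)+1)/((n:ℝ)+1)))
    (hle : ∀ t ∈ Icc (0:ℝ) 1, g t ≤ h t) :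
    K n g x ≤ K n h x := by
  have hN : (0:ℝ) ≤ (n:ℝ)+1 := by positivity
  unfold K
  apply mul_le_mul_of_nonneg_left ?_ hN
  refine Finset.sum_le_sum ?_
  intro k hk
  apply mul_le_mul_of_nonneg_left ?_ (bk_nonneg n k x hx)
  obtain ⟨h0, h12, h1⟩ := endpoints n k hk
  apply intervalIntegral.integral_mono_on h12 (hg k hk) (hh k hk)
  intro t ht
  exact hle t ⟨le_trans h0 ht.1, le_trans ht.2 h1⟩

lemma integrable_on_sub (n : ℕ) (f : ℝ → ℝ) (hf : ContinuousOn f (Icc 0 1)) :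
    ∀ k ∈ Finset.range (n+1), IntervalIntegrable f volume
      ((k:ℝ)/((n:ℝ)+1)) (((k:ℝ)+1)/((n:ℝ)+1)) := by
  intro k hk
  obtain ⟨h0, h12, h1⟩ := endpoints n k hk
  apply ContinuousOn.intervalIntegrable
  apply hf.mono
  rw [uIcc_of_le h12]
  exact Icc_subset_Icc h0 h1

lemma K_continuous (n : ℕ) (f : ℝ → ℝ) : Continuous (fun x => K n f x) := by
  unfold K
  apply continuous_const.mul
  apply continuous_finset_sum
  intro k _
  exact ((continuous_const.mul (continuous_pow k)).mul
    ((continuous_const.sub continuous_id).pow _)).mul continuous_const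

lemma modulus_bdd (f : ℝ → ℝ) (hf : ContinuousOn f (Icc 0 1)) (δ : ℝ) :
    BddAbove {d : ℝ | ∃ x ∈ Icc (0:ℝ) 1, ∃ y ∈ Icc (0:ℝ) 1, |x - y| ≤ δ ∧ d = |f x - f y|} := by
  obtain ⟨M, hM⟩ := isCompact_Icc.exists_bound_of_continuousOn hf
  refine ⟨2*M, ?_⟩
  rintro d ⟨x, hx, y, hy, -, rfl⟩
  have h1 := hM x hx
  have h2 := hM y hy
  calc |f x - f y| ≤ |f x| + |f y| := abs_sub _ _
    _ ≤ 2*M := by simp only [Real.norm_eq_abs] at h1 h2; linarith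

lemma modulus_nonneg (f : ℝ → ℝ) (hf : ContinuousOn f (Icc 0 1)) {δ : ℝ} (hδ : 0 ≤ δ) :
    0 ≤ modulus f (Icc 0 1) δ := by
  apply le_csSup (modulus_bdd f hf δ)
  exact ⟨0, by norm_num, 0, by norm_num, by simpa using hδ, by simp⟩

lemma le_modulus (f : ℝ → ℝ) (hf : ContinuousOn f (Icc 0 1)) {δ x y : ℝ}
    (hx : x ∈ Icc (0:ℝ) 1) (hy : y ∈ Icc (0:ℝ) 1) (hxy : |x - y| ≤ δ) :
    |f x - f y| ≤ modulus f (Icc 0 1) δ :=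
  le_csSup (modulus_bdd f hf δ) ⟨x, hx, y, hy, hxy, rfl⟩

lemma modulus_chain (f : ℝ → ℝ) (hf : ContinuousOn f (Icc 0 1)) {δ : ℝ} (hδ : 0 < δ)
    (m : ℕ) : ∀ x y : ℝ, x ∈ Icc (0:ℝ) 1 → y ∈ Icc (0:ℝ) 1 → x ≤ y → y - x ≤ m * δ →
    |f x - f y| ≤ m * modulus f (Icc 0 1) δ := by
  induction m with
  | zero =>
    intro x y hx hy hxy h
    simp only [Nat.cast_zero, zero_mul] at h ⊢
    have : x = y := le_antisymm hxy (by linarith)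
    simp [this]
  | succ m ih =>
    intro x y hx hy hxy h
    have hω := modulus_nonneg f hf hδ.le
    by_cases hcase : y - x ≤ δ
    · have := le_modulus f hf (δ := δ) hx hy (by rw [abs_sub_le_iff]; constructor <;> linarith)
      have hm : (1:ℝ) ≤ (m:ℝ) + 1 := by have := Nat.cast_nonneg (α := ℝ) m; linarith
      calc |f x - f y| ≤ modulus f (Icc 0 1) δ := this
        _ ≤ ((m:ℝ)+1) * modulus f (Icc 0 1) δ := by nlinarith
        _ = ((m+1 : ℕ):ℝ) * modulus f (Icc 0 1) δ := by push_cast; ring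
    · push_neg at hcase
      set z := x + δ with hz
      have hzy : z ≤ y := by linarith
      have hzI : z ∈ Icc (0:ℝ) 1 := ⟨by have := hx.1; linarith [hδ.le], le_trans hzy hy.2⟩
      have h1 : |f x - f z| ≤ modulus f (Icc 0 1) δ :=
        le_modulus f hf (δ := δ) hx hzI (by rw [abs_sub_le_iff]; constructor <;> simp [hz] <;> linarith)
      have h2 : |f z - f y| ≤ m * modulus f (Icc 0 1) δ := by
        apply ih z y hzI hy hzy
        push_cast at h ⊢
        linarith
      calc |f x - f y| = |(f x - f z) + (f z - f y)| := by ring_nf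
        _ ≤ |f x - f z| + |f z - f y| := abs_add_le _ _
        _ ≤ modulus f (Icc 0 1) δ + m * modulus f (Icc 0 1) δ := add_le_add h1 h2
        _ = ((m+1:ℕ):ℝ) * modulus f (Icc 0 1) δ := by push_cast; ring

lemma modulus_key (f : ℝ → ℝ) (hf : ContinuousOn f (Icc 0 1)) {δ : ℝ} (hδ : 0 < δ)
    {x y : ℝ} (hx : x ∈ Icc (0:ℝ) 1) (hy : y ∈ Icc (0:ℝ) 1) :
    |f x - f y| ≤ (1 + (x - y)^2/δ^2) * modulus f (Icc 0 1) δ := by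
  have hω := modulus_nonneg f hf hδ.le
  set lam := |x - y| / δ with hlam
  have hlam0 : 0 ≤ lam := by positivity
  have hle : |x - y| ≤ (⌈lam⌉₊ : ℝ) * δ := by
    have h1 := Nat.le_ceil lam
    rw [hlam] at h1
    rw [div_le_iff₀ hδ] at h1
    linarith
  have habs : |f x - f y| ≤ (⌈lam⌉₊ : ℝ) * modulus f (Icc 0 1) δ := by
    rcases le_total x y with h | h
    · apply modulus_chain f hf hδ ⌈lam⌉₊ x y hx hy h
      rw [abs_of_nonpos (by linarith), neg_sub] at hle
      exact hle
    · rw [abs_sub_comm]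
      apply modulus_chain f hf hδ ⌈lam⌉₊ y x hy hx h
      rw [abs_of_nonneg (by linarith)] at hle
      exact hle
  have hsq : lam^2 = (x-y)^2/δ^2 := by
    rw [hlam, div_pow, sq_abs]
  have hceil : (⌈lam⌉₊ : ℝ) ≤ 1 + lam^2 := by
    rcases le_total lam 1 with h | h
    · have h1 : ⌈lam⌉₊ ≤ 1 := Nat.ceil_le.mpr (by simpa using h)
      have h2 : (⌈lam⌉₊ : ℝ) ≤ 1 := by exact_mod_cast h1
      nlinarith
    · have := Nat.ceil_lt_add_one hlam0
      nlinarith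
  calc |f x - f y| ≤ (⌈lam⌉₊ : ℝ) * modulus f (Icc 0 1) δ := habs
    _ ≤ (1 + lam^2) * modulus f (Icc 0 1) δ := by nlinarith
    _ = (1 + (x-y)^2/δ^2) * modulus f (Icc 0 1) δ := by rw [hsq]

end Aux

theorem kant_part1 (p : ℝ) (hp : 1 ≤ p) :
    ∀ n : ℕ, 1 ≤ n →
      (∫ x in (0:ℝ)..1, (K n (fun t => (x - t) ^ 2) x) ^ p) ^ (1 / p) ≤
        (1 / ((n : ℝ) + 1)) ^ (1 / p) := by
  have hp0 : (0:ℝ) < p := lt_of_lt_of_le one_pos hp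
  intro n hn
  have hN : (0:ℝ) < (n:ℝ)+1 := by positivity
  have hn1 : (1:ℝ) ≤ (n:ℝ) := by exact_mod_cast hn
  set φ : ℝ → ℝ := fun x => (((n:ℝ)-1)*x*(1-x) + 1/3)/(((n:ℝ)+1)^2) with hφ
  have hre : ∀ x : ℝ, (K n (fun t => (x - t) ^ 2) x) ^ p = (φ x) ^ p := by
    intro x; rw [phi_eq]
  have hpos : ∀ x ∈ Icc (0:ℝ) 1, 0 < φ x := by
    intro x hx
    have h1 := hx.1; have h2 := hx.2
    rw [hφ]
    apply div_pos ?_ (by positivity)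
    nlinarith [mul_nonneg (mul_nonneg (by linarith : (0:ℝ) ≤ (n:ℝ)-1) h1) (by linarith : (0:ℝ) ≤ 1-x)]
  have hup : ∀ x ∈ Icc (0:ℝ) 1, φ x ≤ 1/(2*((n:ℝ)+1)) := by
    intro x hx
    have h1 := hx.1; have h2 := hx.2
    have hq : ((n:ℝ)-1)*x*(1-x) ≤ ((n:ℝ)-1)/4 := by nlinarith [sq_nonneg (2*x-1), hn1]
    rw [hφ, div_le_div_iff₀ (by positivity) (by positivity)]
    nlinarith [hq, hN]
  have hbnd : ∀ x ∈ Icc (0:ℝ) 1, (φ x) ^ p ≤ 1/((n:ℝ)+1) := by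
    intro x hx
    have h1 : (φ x) ^ p ≤ (φ x) ^ (1:ℝ) := by
      apply Real.rpow_le_rpow_of_exponent_ge (hpos x hx) ?_ hp
      calc φ x ≤ 1/(2*((n:ℝ)+1)) := hup x hx
        _ ≤ 1 := by rw [div_le_one (by positivity)]; linarith
    rw [Real.rpow_one] at h1
    calc (φ x) ^ p ≤ φ x := h1
      _ ≤ 1/(2*((n:ℝ)+1)) := hup x hx
      _ ≤ 1/((n:ℝ)+1) := by gcongr; linarith
  have hcont : ContinuousOn (fun x => (φ x) ^ p) (Icc (0:ℝ) 1) := by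
    apply ContinuousOn.rpow_const
    · apply Continuous.continuousOn; rw [hφ]; continuity
    · intro x hx; exact Or.inr hp0.le
  have hIle : (∫ x in (0:ℝ)..1, (φ x) ^ p) ≤ 1/((n:ℝ)+1) := by
    have hcint : IntervalIntegrable (fun x => (φ x) ^ p) volume 0 1 := by
      apply ContinuousOn.intervalIntegrable
      rw [uIcc_of_le (zero_le_one (α := ℝ))]
      exact hcont
    have := intervalIntegral.integral_mono_on (by norm_num : (0:ℝ) ≤ 1)
      hcint
      (intervalIntegrable_const (c := 1/((n:ℝ)+1)))
      hbnd
    simpa using this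
  have hI0 : 0 ≤ ∫ x in (0:ℝ)..1, (φ x) ^ p :=
    intervalIntegral.integral_nonneg (by norm_num)
      (fun x hx => Real.rpow_nonneg (hpos x hx).le p)
  simp only [hre]
  exact Real.rpow_le_rpow hI0 hIle (by positivity)

theorem kant_part2 (p : ℝ) (hp : 1 ≤ p) :
  ∃ C : ℝ, 0 < C ∧ ∀ f : ℝ → ℝ, ContinuousOn f (Icc 0 1) → ∀ n : ℕ, 1 ≤ n →
    (∫ x in (0:ℝ)..1, |K n f x - f x| ^ p) ^ (1 / p) ≤
      2 * modulus f (Icc 0 1) (C * ((n : ℝ) + 1) ^ (-(1 / (2 * p)))) := by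
  have hp0 : (0:ℝ) < p := lt_of_lt_of_le one_pos hp
  refine ⟨1, one_pos, ?_⟩
  intro f hf n hn
  have hN : (0:ℝ) < (n:ℝ)+1 := by positivity
  have hN1 : (1:ℝ) ≤ (n:ℝ)+1 := by
    have : (0:ℝ) ≤ n := Nat.cast_nonneg n
    linarith
  have hn1 : (1:ℝ) ≤ (n:ℝ) := by exact_mod_cast hn
  set δ : ℝ := ((n:ℝ)+1) ^ (-(1/(2*p))) with hδdef
  have hδpos : 0 < δ := Real.rpow_pos_of_pos hN _
  rw [one_mul]
  set ω := modulus f (Icc 0 1) δ with hω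
  have hω0 : 0 ≤ ω := modulus_nonneg f hf hδpos.le
  clear_value ω
  have hδsq : δ^2 = ((n:ℝ)+1) ^ (-(1/p)) := by
    rw [hδdef, ← Real.rpow_natCast (((n:ℝ)+1) ^ (-(1/(2*p)))) 2, ← Real.rpow_mul hN.le]
    congr 1
    push_cast
    field_simp
  have hδ2 : 1/((n:ℝ)+1) ≤ δ^2 := by
    rw [hδsq]
    have h5 : ((n:ℝ)+1) ^ (-1 : ℝ) ≤ ((n:ℝ)+1) ^ (-(1/p)) := by
      apply Real.rpow_le_rpow_of_exponent_le hN1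
      rw [neg_le_neg_iff, div_le_one hp0]
      exact hp
    rwa [Real.rpow_neg_one, ← one_div] at h5
  clear_value δ
  have hfi := integrable_on_sub n f hf
  have hpoint : ∀ x ∈ Icc (0:ℝ) 1, |K n f x - f x| ≤ 2*ω := by
    intro x hx
    rw [← K_sub_const n f x (f x) hfi]
    have h1 : |K n (fun t => f t - f x) x| ≤ K n (fun t => |f t - f x|) x :=
      K_abs_le n _ x hx
    have habsint : ∀ k ∈ Finset.range (n+1), IntervalIntegrable (fun t => |f t - f x|) volume
        ((k:ℝ)/((n:ℝ)+1)) (((k:ℝ)+1)/((n:ℝ)+1)) :=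
      fun k hk => ((hfi k hk).sub intervalIntegrable_const).abs
    have h2 : K n (fun t => |f t - f x|) x ≤ K n (fun t => ω + (ω/δ^2)*(x - t)^2) x := by
      apply K_le n _ _ x hx habsint
        (fun k hk => (by continuity : Continuous fun t : ℝ => ω + (ω/δ^2)*(x - t)^2).intervalIntegrable _ _)
      intro t ht
      have hkey := modulus_key f hf hδpos ht hx
      rw [← hω] at hkey
      calc |f t - f x| ≤ (1 + (t - x)^2/δ^2) * ω := hkey
        _ = ω + (ω/δ^2)*(x-t)^2 := by field_simp; ring
    have h3 : K n (fun t => ω + (ω/δ^2)*(x - t)^2) x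
        = ω + (ω/δ^2) * ((((n:ℝ)-1)*x*(1-x) + 1/3)/(((n:ℝ)+1)^2)) := K_affine n ω (ω/δ^2) x
    have hup : (((n:ℝ)-1)*x*(1-x) + 1/3)/(((n:ℝ)+1)^2) ≤ 1/(2*((n:ℝ)+1)) := by
      have h1' := hx.1; have h2' := hx.2
      have hq : ((n:ℝ)-1)*x*(1-x) ≤ ((n:ℝ)-1)/4 := by nlinarith [sq_nonneg (2*x-1), hn1]
      rw [div_le_div_iff₀ (by positivity) (by positivity)]
      nlinarith [hq, hN]
    have h4 : (ω/δ^2) * ((((n:ℝ)-1)*x*(1-x) + 1/3)/(((n:ℝ)+1)^2)) ≤ ω := by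
      have hφδ : (((n:ℝ)-1)*x*(1-x) + 1/3)/(((n:ℝ)+1)^2) ≤ δ^2 := by
        calc (((n:ℝ)-1)*x*(1-x) + 1/3)/(((n:ℝ)+1)^2) ≤ 1/(2*((n:ℝ)+1)) := hup
          _ ≤ 1/((n:ℝ)+1) := by gcongr <;> linarith
          _ ≤ δ^2 := hδ2
      calc (ω/δ^2) * ((((n:ℝ)-1)*x*(1-x) + 1/3)/(((n:ℝ)+1)^2)) ≤ (ω/δ^2) * δ^2 := by
            apply mul_le_mul_of_nonneg_left hφδ (by positivity)
        _ = ω := div_mul_cancel₀ ω (by positivity)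
      -- note: φ value nonneg needed for mul_le_mul? mul_le_mul_of_nonneg_left only needs left factor nonneg
    calc |K n (fun t => f t - f x) x| ≤ K n (fun t => |f t - f x|) x := h1
      _ ≤ K n (fun t => ω + (ω/δ^2)*(x - t)^2) x := h2
      _ = ω + (ω/δ^2) * ((((n:ℝ)-1)*x*(1-x) + 1/3)/(((n:ℝ)+1)^2)) := h3
      _ ≤ ω + ω := by linarith
      _ = 2*ω := by ring
  have hcont2 : ContinuousOn (fun x => |K n f x - f x|^p) (Icc (0:ℝ) 1) := by
    apply ContinuousOn.rpow_const
    · exact ((K_continuous n f).continuousOn.sub hf).abs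
    · intro x hx; exact Or.inr hp0.le
  have hIle : (∫ x in (0:ℝ)..1, |K n f x - f x|^p) ≤ (2*ω)^p := by
    have hmono : ∀ x ∈ Icc (0:ℝ) 1, |K n f x - f x|^p ≤ (2*ω)^p :=
      fun x hx => Real.rpow_le_rpow (abs_nonneg _) (hpoint x hx) hp0.le
    have hcint : IntervalIntegrable (fun x => |K n f x - f x|^p) volume 0 1 := by
      apply ContinuousOn.intervalIntegrable
      rw [uIcc_of_le (zero_le_one (α := ℝ))]
      exact hcont2
    have := intervalIntegral.integral_mono_on (by norm_num : (0:ℝ) ≤ 1)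
      hcint
      (intervalIntegrable_const (c := (2*ω)^p))
      hmono
    simpa using this
  have hI0 : 0 ≤ ∫ x in (0:ℝ)..1, |K n f x - f x|^p :=
    intervalIntegral.integral_nonneg (by norm_num)
      (fun x hx => Real.rpow_nonneg (abs_nonneg _) p)
  calc (∫ x in (0:ℝ)..1, |K n f x - f x|^p) ^ (1/p) ≤ ((2*ω)^p) ^ (1/p) :=
        Real.rpow_le_rpow hI0 hIle (by positivity)
    _ = 2*ω := by
        rw [← Real.rpow_mul (by positivity), mul_one_div_cancel hp0.ne', Real.rpow_one]

/-- `Lᵖ` bound on the second moment of the Kantorovich polynomials and the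
resulting quantitative Korovkin estimate in `Lᵖ(0,1)`. -/
theorem kantorovich_Lp_estimate (p : ℝ) (hp : 1 ≤ p) :
    (∀ n : ℕ, 1 ≤ n →
      (∫ x in (0:ℝ)..1, (K n (fun t => (x - t) ^ 2) x) ^ p) ^ (1 / p) ≤
        (1 / ((n : ℝ) + 1)) ^ (1 / p)) ∧
    ∃ C : ℝ, 0 < C ∧ ∀ f : ℝ → ℝ, ContinuousOn f (Icc 0 1) → ∀ n : ℕ, 1 ≤ n →
      (∫ x in (0:ℝ)..1, |K n f x - f x| ^ p) ^ (1 / p) ≤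
        2 * modulus f (Icc 0 1) (C * ((n : ℝ) + 1) ^ (-(1 / (2 * p)))) := by
  exact ⟨kant_part1 p hp, kant_part2 p hp⟩
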